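/- Let 𝔤 be the Lie algebra 𝔯₃ (ℝ³ with brackets [e₁,e₂]=e₂+e₃, [e₁,e₃]=e₃). Then the automorphism group of 𝔤, as matrices with respect to the basis {e₁,e₂,e₃}, is exactly the set of matrices [[1,0,0],[x₂₁,x₂₂,0],[x₃₁,x₃₂,x₂₂]] with x₂₂ ≠ 0. -/

import Mathlib

open Matrix

/-- The bracket of 𝔯₃ on ℝ³ : [e₁,e₂]=e₂+e₃, [e₁,e₃]=e₃, [e₂,e₃]=0. -/
def br3 (x y : Fin 3 → ℝ) : Fin 3 → ℝ :=
  ![0,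
    x 0 * y 1 - x 1 * y 0,
    (x 0 * y 1 - x 1 * y 0) + (x 0 * y 2 - x 2 * y 0)]

/-- The automorphisms of 𝔯₃ are exactly the matrices
    [[1,0,0],[x₂₁,x₂₂,0],[x₃₁,x₃₂,x₂₂]] with x₂₂ ≠ 0. -/
theorem automorphisms_r3 :
    {g : Matrix (Fin 3) (Fin 3) ℝ |
      IsUnit g ∧ ∀ x y, g.mulVec (br3 x y) = br3 (g.mulVec x) (g.mulVec y)} =
    {g : Matrix (Fin 3) (Fin 3) ℝ |
      ∃ x21 x22 x31 x32 : ℝ, x22 ≠ 0 ∧ g = !![1,0,0; x21,x22,0; x31,x32,x22]} := by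
  ext g
  simp only [Set.mem_setOf_eq]
  constructor
  · rintro ⟨hu, hb⟩
    have hdet : g.det ≠ 0 := by
      simpa using (Matrix.isUnit_iff_isUnit_det g).mp hu |>.ne_zero
    rw [Matrix.det_fin_three] at hdet
    have h12 := hb ![1,0,0] ![0,1,0]
    have h13 := hb ![1,0,0] ![0,0,1]
    have e12 := fun i => congrFun h12 i
    have e13 := fun i => congrFun h13 i
    simp only [br3, mulVec, dotProduct, Fin.sum_univ_three] at e12 e13
    have a0 := e12 0; have a1 := e12 1; have a2 := e12 2
    have b0 := e13 0; have b1 := e13 1; have b2 := e13 2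
    norm_num [Matrix.cons_val_zero, Matrix.cons_val_one, Matrix.cons_val_two] at a0 a1 a2 b0 b1 b2
    have h01 : g 0 1 = 0 := by linarith
    by_cases h00 : g 0 0 = 1
    · have hA : g 1 2 = 0 := by
        rw [h00, h01] at a1; linarith
      have hB : g 2 2 = g 1 1 := by
        rw [h00, h01] at a2; linarith
      refine ⟨g 1 0, g 1 1, g 2 0, g 2 1, ?_, ?_⟩
      · intro hz
        apply hdet
        rw [h00, h01, b0, hA, hB, hz]; ring
      · ext i j
        fin_cases i <;> fin_cases j <;>
          simp [h00, h01, b0, hA, hB]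
    · exfalso
      have hA : g 1 2 * (1 - g 0 0) = 0 := by linear_combination b1 - g 1 0 * b0
      have hne : (1 : ℝ) - g 0 0 ≠ 0 := sub_ne_zero.mpr (Ne.symm h00)
      have h12' : g 1 2 = 0 := (mul_eq_zero.mp hA).resolve_right hne
      have hB : g 2 2 * (1 - g 0 0) = 0 := by
        linear_combination b2 + g 0 0 * h12' - (g 1 0 + g 2 0) * b0
      have h22 : g 2 2 = 0 := (mul_eq_zero.mp hB).resolve_right hne
      apply hdet
      rw [h01, b0, h12', h22]; ring
  · rintro ⟨x21, x22, x31, x32, h, rfl⟩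
    constructor
    · rw [Matrix.isUnit_iff_isUnit_det, Matrix.det_fin_three]
      norm_num [Matrix.cons_val_two]
      exact h
    · intro x y
      funext i
      fin_cases i <;>
        simp [br3, mulVec, dotProduct, Fin.sum_univ_three] <;> ring
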